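/- Independent swaps are collapsed syntactically: let π = α u v β and ρ = α v u β with u < v, and suppose some entry of β lies strictly between u and v (Tonks-independence). Then h(w(π)) =_I h(w(ρ)); consequently ε(h(w(π))) = ε(h(w(ρ))). -/

import Mathlib

/-- Indexed terms of the language `L^I`: generators `2^k` and partial compositions. -/
inductive Trm : Type
  | gen : ℕ → Trm
  | comp : Trm → ℕ → Trm → Trm
deriving DecidableEq

namespace Trm

/-- Arity `|A|`. -/
def arity : Trm → ℕ
  | gen _ => 2
  | comp A _ B => A.arity + B.arity - 1

/-- Set of indices occurring in a term. -/
def ind : Trm → Finset ℕ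
  | gen k => {k}
  | comp A _ B => A.ind ∪ B.ind

/-- Root index. -/
def root : Trm → ℕ
  | gen k => k
  | comp A _ _ => A.root

/-- Number of occurrences of the generator. -/
def countGen : Trm → ℕ
  | gen _ => 1
  | comp A _ B => A.countGen + B.countGen

end Trm

/-- The congruence `=_I` generated by (assoc1) and (assoc2). -/
inductive IEq : Trm → Trm → Prop
  | refl (A : Trm) : IEq A A
  | symm {A B} : IEq A B → IEq B A
  | trans {A B C} : IEq A B → IEq B C → IEq A C
  | congr {A A' B B'} (n : ℕ) : IEq A A' → IEq B B' →
      IEq (Trm.comp A n B) (Trm.comp A' n B')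
  | assoc1 (A B C : Trm) (n m : ℕ) : n ≤ m → m < n + B.arity →
      IEq (Trm.comp (Trm.comp A n B) m C) (Trm.comp A n (Trm.comp B (m - n + 1) C))
  | assoc2 (A B C : Trm) (n m : ℕ) : n + B.arity ≤ m →
      IEq (Trm.comp (Trm.comp A n B) m C) (Trm.comp (Trm.comp A (m - B.arity + 1) C) n B)

/-- Planar binary trees. -/
inductive BT : Type
  | leaf : BT
  | node : BT → BT → BT
deriving DecidableEq

namespace BT

/-- Number of leaves. -/
def leaves : BT → ℕ
  | leaf => 1
  | node l r => l.leaves + r.leaves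

/-- Graft `S` at the `i`-th leaf (1-indexed) of a tree. -/
def graft : BT → ℕ → BT → BT
  | leaf, _, S => S
  | node l r, i, S =>
    if i ≤ l.leaves then node (l.graft i S) r else node l (r.graft (i - l.leaves) S)

end BT

/-- Evaluation `ε` of indexed terms to planar binary trees. -/
def Trm.eval : Trm → BT
  | Trm.gen _ => BT.node BT.leaf BT.leaf
  | Trm.comp A i B => A.eval.graft i B.eval

/-- `l`-factors. -/
inductive LFactor : Trm → Prop
  | gen (k : ℕ) : LFactor (Trm.gen k)
  | step {A : Trm} (j : ℕ) : LFactor A → j ∉ A.ind →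
      LFactor (Trm.comp A ((A.ind.filter (· < j)).card + 1) (Trm.gen j))

/-- Auxiliary for the head-insertion encoding: `done` is the list of already
inserted letters. -/
def hAux : Trm → List ℕ → List ℕ → Trm
  | A, _, [] => A
  | A, done, y :: rest =>
      hAux (Trm.comp A ((done.filter (· < y)).length + 1) (Trm.gen y)) (done ++ [y]) rest

/-- Head-insertion encoding `h` (junk value on the empty word). -/
def hWord : List ℕ → Trm
  | [] => Trm.gen 0
  | x :: rest => hAux (Trm.gen x) [x] rest

/-- `u_a(x)`: number of letters to the left of `x` in `a` that are greater than `x`. -/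
def uCount (a : List ℕ) (x : ℕ) : ℕ := ((a.takeWhile (· ≠ x)).filter (x < ·)).length

/-- Decreasing rearrangement of a word. -/
def sortDesc (a : List ℕ) : List ℕ := (a.mergeSort (· ≤ ·)).reverse

/-- Decreasing encoding `f` (junk value on the empty word). -/
def fWord (a : List ℕ) : Trm :=
  match sortDesc a with
  | [] => Trm.gen 0
  | k :: rest => rest.foldl (fun A x => Trm.comp A (uCount a x + 1) (Trm.gen x)) (Trm.gen k)

/-- Standardization of a word of distinct integers. -/
def std (a : List ℕ) : List ℕ := a.map (fun x => (a.filter (· ≤ x)).length)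

/-- Tonks' vertex map, splitting form `φ`. -/
def tonksPhi (a : List ℕ) : BT :=
  match ha : a.getLast? with
  | none => BT.leaf
  | some x =>
      BT.node (tonksPhi (std (a.filter (· < x)))) (tonksPhi (std (a.filter (x < ·))))
termination_by a.length
decreasing_by
  · have hx : x ∈ a := List.mem_of_mem_getLast? (Option.mem_def.mpr ha)
    have : (a.filter (· < x)).length < a.length := by
      apply List.length_filter_lt_length_iff_exists.2
      exact ⟨x, hx, by simp⟩
    simp only [std, List.length_map, List.length_unattach]
    rw [← List.length_attach (l := a)]
    apply List.length_filter_lt_length_iff_exists.2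
    exact ⟨⟨x, hx⟩, List.mem_attach _ _, by simp⟩
  · have hx : x ∈ a := List.mem_of_mem_getLast? (Option.mem_def.mpr ha)
    have : (a.filter (x < ·)).length < a.length := by
      apply List.length_filter_lt_length_iff_exists.2
      exact ⟨x, hx, by simp⟩
    simp only [std, List.length_map, List.length_unattach]
    rw [← List.length_attach (l := a)]
    apply List.length_filter_lt_length_iff_exists.2
    exact ⟨⟨x, hx⟩, List.mem_attach _ _, by simp⟩

/-- Tonks' vertex map, head-grafting form `φ̂`. -/
def phiHat : List ℕ → BT
  | [] => BT.leaf
  | x :: rest => (phiHat (std rest)).graft x (BT.node BT.leaf BT.leaf)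
termination_by a => a.length
decreasing_by
  simp [std]

/-- The Loday–Ronco map `ψ`. -/
def lodayPsi (a : List ℕ) : BT :=
  match hm : a.maximum with
  | none => BT.leaf
  | some m =>
      let i := a.idxOf m
      BT.node (lodayPsi (std (a.take i))) (lodayPsi (std (a.drop (i + 1))))
termination_by a.length
decreasing_by
  · have hmem : m ∈ a := List.maximum_mem hm
    have hi : a.idxOf m < a.length := List.idxOf_lt_length_of_mem hmem
    simp only [std, List.length_map, List.length_take]
    omega
  · have : a ≠ [] := by rintro rfl; simp [List.maximum] at hm
    have : 0 < a.length := List.length_pos_iff.2 this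
    simp only [std, List.length_map, List.length_drop]
    omega

/-- Inverse of a permutation word on `{1,…,n}`. -/
def invWord (π : List ℕ) : List ℕ :=
  (List.range π.length).map (fun j => π.idxOf (j + 1) + 1)

/-- One Tamari (right rotation) step, at any subtree. -/
inductive TamariStep : BT → BT → Prop
  | rot (X Y Z : BT) : TamariStep (BT.node (BT.node X Y) Z) (BT.node X (BT.node Y Z))
  | left {l l'} (r : BT) : TamariStep l l' → TamariStep (BT.node l r) (BT.node l' r)
  | right (l : BT) {r r'} : TamariStep r r' → TamariStep (BT.node l r) (BT.node l r')

/-- The Tamari order. -/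
def TamariLE : BT → BT → Prop := Relation.ReflTransGen TamariStep

/-- The strict Tamari order. -/
def TamariLT : BT → BT → Prop := Relation.TransGen TamariStep

/-- One cover of the right weak Bruhat order on words. -/
inductive BruhatStep : List ℕ → List ℕ → Prop
  | swap (α : List ℕ) {u v : ℕ} (β : List ℕ) : u < v →
      BruhatStep (α ++ u :: v :: β) (α ++ v :: u :: β)

/-- The right weak Bruhat order on words. -/
def BruhatLE : List ℕ → List ℕ → Prop := Relation.ReflTransGen BruhatStep

/-- Head-insertion index `k(a; σ)`. -/
def kIdx (a : ℕ) (σ : List ℕ) : ℕ := 1 + (σ.filter (· < a)).length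

namespace BT

lemma one_le_leaves : ∀ T : BT, 1 ≤ T.leaves
  | leaf => le_refl 1
  | node l r => by
      have := one_le_leaves l
      simp only [leaves]; omega

lemma leaves_graft : ∀ (T : BT) (i : ℕ) (S : BT),
    (T.graft i S).leaves = T.leaves + S.leaves - 1
  | leaf, i, S => by simp [graft, leaves]
  | node l r, i, S => by
      have hl := one_le_leaves l
      have hr := one_le_leaves r
      have hs := one_le_leaves S
      by_cases h : i ≤ l.leaves <;>
        simp only [graft, h, if_true, if_false, leaves, leaves_graft] <;> omega

lemma graft_graft_swap (S R : BT) : ∀ (T : BT) (n m : ℕ), 1 ≤ n → n + S.leaves ≤ m →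
    m ≤ T.leaves + S.leaves - 1 →
    (T.graft n S).graft m R = (T.graft (m - S.leaves + 1) R).graft n S
  | leaf, n, m, hn, h1, h2 => by
      have hs := one_le_leaves S
      simp only [leaves] at h2
      omega
  | node l r, n, m, hn, h1, h2 => by
      have hl := one_le_leaves l
      have hr := one_le_leaves r
      have hs := one_le_leaves S
      have hR := one_le_leaves R
      simp only [leaves] at h2
      by_cases hnl : n ≤ l.leaves
      · by_cases hml : m ≤ l.leaves + S.leaves - 1
        · have c1 : m - S.leaves + 1 ≤ l.leaves := by omega
          have c2 : n ≤ l.leaves + R.leaves - 1 := by omega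
          calc ((node l r).graft n S).graft m R
              = node ((l.graft n S).graft m R) r := by
                simp [graft, hnl, leaves_graft, hml]
            _ = node ((l.graft (m - S.leaves + 1) R).graft n S) r := by
                rw [graft_graft_swap S R l n m hn h1 hml]
            _ = ((node l r).graft (m - S.leaves + 1) R).graft n S := by
                simp [graft, c1, leaves_graft, c2]
        · have c1 : ¬ (m - S.leaves + 1 ≤ l.leaves) := by omega
          have c2 : ¬ (m ≤ l.leaves + S.leaves - 1) := hml
          have e : m - (l.leaves + S.leaves - 1) = m - S.leaves + 1 - l.leaves := by omega
          simp [graft, hnl, c1, c2, leaves_graft, e]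
      · have c0 : ¬ (m ≤ l.leaves) := by omega
        have c1 : ¬ (m - S.leaves + 1 ≤ l.leaves) := by omega
        have hop : 1 ≤ n - l.leaves := by omega
        have hop2 : (n - l.leaves) + S.leaves ≤ m - l.leaves := by omega
        have hop3 : m - l.leaves ≤ r.leaves + S.leaves - 1 := by omega
        have e : m - l.leaves - S.leaves + 1 = m - S.leaves + 1 - l.leaves := by omega
        simp only [graft, if_neg hnl, if_neg c0, if_neg c1, leaves_graft]
        rw [graft_graft_swap S R r (n - l.leaves) (m - l.leaves) hop hop2 hop3, e]

end BT

lemma hAux_congr : ∀ (rest : List ℕ) {A A' : Trm} {done done' : List ℕ},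
    done.Perm done' → IEq A A' → IEq (hAux A done rest) (hAux A' done' rest)
  | [], _, _, _, _, _, h => h
  | y :: rest, A, A', done, done', hp, h => by
      rw [hAux, hAux, (hp.filter (· < y)).length_eq]
      exact hAux_congr rest (hp.append_right [y]) (IEq.congr _ h (IEq.refl _))

lemma hAux_eval : ∀ (rest : List ℕ) {A A' : Trm} {done done' : List ℕ},
    done.Perm done' → A.eval = A'.eval →
    (hAux A done rest).eval = (hAux A' done' rest).eval
  | [], _, _, _, _, _, h => h
  | y :: rest, A, A', done, done', hp, h => by
      rw [hAux, hAux, (hp.filter (· < y)).length_eq]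
      exact hAux_eval rest (hp.append_right [y]) (by simp [Trm.eval, h])

lemma hAux_append : ∀ (l1 l2 : List ℕ) (A : Trm) (done : List ℕ),
    hAux A done (l1 ++ l2) = hAux (hAux A done l1) (done ++ l1) l2
  | [], l2, A, done => by simp [hAux]
  | x :: l1, l2, A, done => by
      simp only [List.cons_append, hAux]
      rw [hAux_append l1 l2]
      simp

lemma hAux_leaves : ∀ (rest : List ℕ) (A : Trm) (done : List ℕ),
    (hAux A done rest).eval.leaves = A.eval.leaves + rest.length
  | [], A, done => by simp [hAux]
  | y :: rest, A, done => by
      rw [hAux, hAux_leaves rest]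
      have := BT.one_le_leaves A.eval
      simp [Trm.eval, BT.leaves_graft, BT.leaves]
      omega

lemma filter_lt_mono (u v : ℕ) (huv : u ≤ v) : ∀ l : List ℕ,
    (l.filter (· < u)).length ≤ (l.filter (· < v)).length
  | [] => le_refl 0
  | y :: t => by
      have IH := filter_lt_mono u v huv t
      by_cases h : y < u
      · simp [List.filter_cons, h, lt_of_lt_of_le h huv]; omega
      · by_cases h2 : y < v <;> simp [List.filter_cons, h, h2] <;> omega

lemma filter_lt_strict {u v x : ℕ} (h1 : u < x) (h2 : x < v) :
    ∀ l : List ℕ, x ∈ l → (l.filter (· < u)).length < (l.filter (· < v)).length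
  | [], hm => absurd hm List.not_mem_nil
  | y :: t, hm => by
      rcases List.mem_cons.1 hm with rfl | hm'
      · have := filter_lt_mono u v (le_of_lt (lt_trans h1 h2)) t
        simp [List.filter_cons, not_lt.2 (le_of_lt h1), h2]
        omega
      · have := filter_lt_strict h1 h2 t hm'
        by_cases hy : y < u
        · simp [List.filter_cons, hy, lt_trans hy (lt_trans h1 h2)]; omega
        · by_cases hy2 : y < v <;> simp [List.filter_cons, hy, hy2] <;> omega

theorem independent_swap_collapse (α β : List ℕ) (u v : ℕ) (huv : u < v)
    (hnd : (α ++ u :: v :: β).Nodup) (hpos : ∀ x ∈ α ++ u :: v :: β, 0 < x)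
    (hindep : ∃ x ∈ β, u < x ∧ x < v) :
    IEq (hWord (α ++ u :: v :: β).reverse) (hWord (α ++ v :: u :: β).reverse) ∧
    (hWord (α ++ u :: v :: β).reverse).eval = (hWord (α ++ v :: u :: β).reverse).eval := by
  obtain ⟨x, hxβ, hux, hxv⟩ := hindep
  have hβ : β.reverse ≠ [] := by
    intro h
    rw [List.reverse_eq_nil_iff] at h
    subst h
    exact absurd hxβ List.not_mem_nil
  obtain ⟨b, γ, hbg⟩ := List.exists_cons_of_ne_nil hβ
  have h1 : (α ++ u :: v :: β).reverse = (b :: γ) ++ v :: u :: α.reverse := by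
    rw [← hbg]; simp
  have h2 : (α ++ v :: u :: β).reverse = (b :: γ) ++ u :: v :: α.reverse := by
    rw [← hbg]; simp
  rw [h1, h2]
  set L := α.reverse with hL
  set cu := ((b :: γ).filter (· < u)).length with hcu
  set cv := ((b :: γ).filter (· < v)).length with hcv
  have hxmem : x ∈ b :: γ := by rw [← hbg]; exact List.mem_reverse.2 hxβ
  have hcc : cu < cv := filter_lt_strict hux hxv (b :: γ) hxmem
  have hcvle : cv ≤ γ.length + 1 := by
    have := List.length_filter_le (fun y => decide (y < v)) (b :: γ)
    simpa [hcv] using this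
  -- rewrite both hWords as two hAux steps past A₀
  have expand : ∀ y z : ℕ, hWord ((b :: γ) ++ y :: z :: L) =
      hAux (Trm.comp
              (Trm.comp (hAux (Trm.gen b) [b] γ)
                (((b :: γ).filter (· < y)).length + 1) (Trm.gen y))
              ((((b :: γ) ++ [y]).filter (· < z)).length + 1) (Trm.gen z))
        (((b :: γ) ++ [y]) ++ [z]) L := by
    intro y z
    rw [List.cons_append, hWord, show γ ++ y :: z :: L = γ ++ ((y :: z :: []) ++ L) by simp,
      hAux_append, hAux_append]
    simp [hAux]
  rw [expand, expand]
  have hc2 : (((b :: γ) ++ [v]).filter (· < u)).length = cu := by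
    rw [List.filter_append]
    simp [Nat.not_lt.2 huv.le, hcu]
  have hc3 : (((b :: γ) ++ [u]).filter (· < v)).length = cv + 1 := by
    rw [List.filter_append]
    simp [huv, hcv]
  rw [hc2, hc3]
  set A₀ := hAux (Trm.gen b) [b] γ with hA₀
  have hperm : (((b :: γ) ++ [v]) ++ [u]).Perm (((b :: γ) ++ [u]) ++ [v]) := by
    have : ((v : ℕ) :: u :: []).Perm (u :: v :: []) := List.Perm.swap u v []
    simpa using (this.append_left (b :: γ))
  have harU : (Trm.gen u).arity = 2 := rfl
  have key : IEq (Trm.comp (Trm.comp A₀ (cv + 1) (Trm.gen v)) (cu + 1) (Trm.gen u))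
      (Trm.comp (Trm.comp A₀ (cu + 1) (Trm.gen u)) (cv + 1 + 1) (Trm.gen v)) := by
    have h := IEq.assoc2 A₀ (Trm.gen u) (Trm.gen v) (cu + 1) (cv + 2)
      (by rw [harU]; omega)
    rw [harU] at h
    have e : cv + 2 - 2 + 1 = cv + 1 := by omega
    rw [e] at h
    exact h.symm
  have hTleaves : A₀.eval.leaves = γ.length + 2 := by
    rw [hA₀, hAux_leaves]
    simp [Trm.eval, BT.leaves]
    omega
  have keyE : (Trm.comp (Trm.comp A₀ (cv + 1) (Trm.gen v)) (cu + 1) (Trm.gen u)).eval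
      = (Trm.comp (Trm.comp A₀ (cu + 1) (Trm.gen u)) (cv + 1 + 1) (Trm.gen v)).eval := by
    simp only [Trm.eval]
    have hsl : (BT.node BT.leaf BT.leaf).leaves = 2 := rfl
    have h := BT.graft_graft_swap (BT.node BT.leaf BT.leaf) (BT.node BT.leaf BT.leaf)
      A₀.eval (cu + 1) (cv + 2) (by omega) (by rw [hsl]; omega)
      (by rw [hsl, hTleaves]; omega)
    rw [hsl] at h
    have e : cv + 2 - 2 + 1 = cv + 1 := by omega
    rw [e] at h
    exact h.symm
  exact ⟨hAux_congr L hperm key, hAux_eval L hperm keyE⟩
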